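/- Let G be a graph with an m-sparse spanning subgraph F, let xy be an edge of G not in F, and let Q be a minimal m-tree-connected subgraph of F containing x and y. Then for every edge e of Q, the graph F - e + xy obtained from F by deleting e and adding xy is still m-sparse. -/

import Mathlib

open SimpleGraph

def IsTreeConn {V : Type*} (m : ℕ) (G : SimpleGraph V) : Prop :=
  ∃ T : Fin m → SimpleGraph V, (∀ i, T i ≤ G) ∧ (∀ i, (T i).IsTree) ∧
    ∀ i j, i ≠ j → Disjoint (T i).edgeSet (T j).edgeSet

noncomputable def eIn {V : Type*} (G : SimpleGraph V) (S : Set V) : ℕ :=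
  {e ∈ G.edgeSet | ∀ v ∈ e, v ∈ S}.ncard

def IsSparse {V : Type*} (m : ℕ) (G : SimpleGraph V) : Prop :=
  ∀ S : Set V, S.Nonempty → (eIn G S : ℤ) ≤ m * S.ncard - m

def mComp {V : Type*} (m : ℕ) (G : SimpleGraph V) (v : V) : Set V :=
  ⋃₀ {X : Set V | v ∈ X ∧ IsTreeConn m (G.induce X)}

noncomputable def crossE {V : Type*} (m : ℕ) (G : SimpleGraph V) : ℕ :=
  {e ∈ G.edgeSet | ∃ u ∈ e, ∃ w ∈ e, mComp m G u ≠ mComp m G w}.ncard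

noncomputable def Omega {V : Type*} (m : ℕ) (G : SimpleGraph V) : ℤ :=
  m * (Set.range (mComp m G)).ncard - crossE m G

/-! ### Auxiliary counting lemmas -/

lemma ncard_biUnion {α ι : Type*} [Finite α] (s : Finset ι) (f : ι → Set α)
    (h : ∀ i ∈ s, ∀ j ∈ s, i ≠ j → Disjoint (f i) (f j)) :
    (⋃ i ∈ s, f i).ncard = ∑ i ∈ s, (f i).ncard := by
  classical
  induction s using Finset.induction with
  | empty => simp
  | @insert a s ha ih =>
    rw [Finset.sum_insert ha, Finset.set_biUnion_insert,
      Set.ncard_union_eq ?_ (Set.toFinite _) (Set.toFinite _),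
      ih (fun i hi j hj hij => h i (Finset.mem_insert_of_mem hi) j
        (Finset.mem_insert_of_mem hj) hij)]
    rw [Set.disjoint_iUnion₂_right]
    intro i hi
    exact h a (Finset.mem_insert_self a s) i (Finset.mem_insert_of_mem hi)
      (by rintro rfl; exact ha hi)

lemma ncard_iUnion_fin {α : Type*} [Finite α] {m : ℕ} (f : Fin m → Set α)
    (h : ∀ i j, i ≠ j → Disjoint (f i) (f j)) :
    (⋃ i, f i).ncard = ∑ i, (f i).ncard := by
  rw [← ncard_biUnion Finset.univ f (fun i _ j _ hij => h i j hij)]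
  congr 1
  ext a
  simp

lemma image_induce_edgeSet {W : Type*} (H : SimpleGraph W) (s : Set W) :
    Sym2.map (Subtype.val : s → W) '' (H.induce s).edgeSet
      = {e ∈ H.edgeSet | ∀ v ∈ e, v ∈ s} := by
  ext e
  constructor
  · rintro ⟨e', he', rfl⟩
    induction e' using Sym2.ind with
    | _ a b =>
      rw [SimpleGraph.mem_edgeSet] at he'
      refine ⟨by simpa using he', ?_⟩
      intro v hv
      rw [Sym2.map_pair_eq, Sym2.mem_iff] at hv
      rcases hv with rfl | rfl
      exacts [a.2, b.2]
  · rintro ⟨he, hin⟩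
    induction e using Sym2.ind with
    | _ a b =>
      rw [SimpleGraph.mem_edgeSet] at he
      have ha : a ∈ s := hin a (Sym2.mem_mk_left a b)
      have hb : b ∈ s := hin b (Sym2.mem_mk_right a b)
      exact ⟨s(⟨a, ha⟩, ⟨b, hb⟩), by simpa using he, by simp [Sym2.map_pair_eq]⟩

lemma induce_edgeSet_ncard {W : Type*} (H : SimpleGraph W) (s : Set W) :
    (H.induce s).edgeSet.ncard = {e ∈ H.edgeSet | ∀ v ∈ e, v ∈ s}.ncard := by
  rw [← image_induce_edgeSet, Set.ncard_image_of_injective _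
    (Sym2.map.injective Subtype.val_injective)]

lemma isAcyclic_comap {α β : Type*} {G : SimpleGraph β} (h : G.IsAcyclic) (f : α ↪ β) :
    (G.comap f).IsAcyclic := by
  intro v c hc
  exact h (c.map (SimpleGraph.Embedding.comap f G).toHom)
    (hc.map (SimpleGraph.Embedding.comap f G).injective)

lemma isAcyclic_induce {W : Type*} {H : SimpleGraph W} (h : H.IsAcyclic) (s : Set W) :
    (H.induce s).IsAcyclic :=
  isAcyclic_comap h (Function.Embedding.subtype _)

lemma edge_split {W : Type*} [Finite W] (H : SimpleGraph W) (s : Set W)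
    (hcl : ∀ a b, H.Adj a b → a ∈ s → b ∈ s) :
    H.edgeSet.ncard = (H.induce s).edgeSet.ncard + (H.induce sᶜ).edgeSet.ncard := by
  rw [induce_edgeSet_ncard, induce_edgeSet_ncard]
  rw [← Set.ncard_union_eq ?_ (Set.toFinite _) (Set.toFinite _)]
  · congr 1
    ext e
    induction e using Sym2.ind with
    | _ a b =>
      constructor
      · intro he
        have hadj : H.Adj a b := he
        by_cases ha : a ∈ s
        · exact Or.inl ⟨he, by
            intro v hv
            rw [Sym2.mem_iff] at hv
            rcases hv with h | h
            · rw [h]; exact ha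
            · rw [h]; exact hcl a b hadj ha⟩
        · refine Or.inr ⟨he, ?_⟩
          intro v hv
          rw [Sym2.mem_iff] at hv
          rcases hv with h | h
          · rw [h]; exact ha
          · rw [h]
            intro hb
            exact ha (hcl b a hadj.symm hb)
      · rintro (⟨he, _⟩ | ⟨he, _⟩) <;> exact he
  · rw [Set.disjoint_left]
    rintro e ⟨he, hs⟩ ⟨_, hsc⟩
    induction e using Sym2.ind with
    | _ a b =>
      exact (hsc a (Sym2.mem_mk_left a b)) (hs a (Sym2.mem_mk_left a b))

universe u

lemma tree_edge_ncard {W : Type u} [Finite W] {H : SimpleGraph W} (h : H.IsTree) :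
    H.edgeSet.ncard + 1 = Nat.card W := by
  classical
  cases nonempty_fintype W
  rw [Nat.card_eq_fintype_card, ← h.card_edgeFinset]
  congr 1
  rw [← SimpleGraph.coe_edgeFinset, Set.ncard_coe_finset]

lemma forest_card_aux : ∀ (n : ℕ) {W : Type u} [Finite W] (H : SimpleGraph W),
    Nat.card W ≤ n → H.IsAcyclic → Nonempty W →
    H.edgeSet.ncard + 1 ≤ Nat.card W := by
  intro n
  induction n with
  | zero =>
    intro W _ H hc ha hne
    have := Nat.card_pos (α := W)
    omega
  | succ n ih =>
    intro W _ H hc ha hne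
    classical
    obtain ⟨u⟩ := hne
    set s : Set W := {w | H.Reachable u w} with hs
    by_cases hsc : sᶜ = ∅
    · have hsu : s = Set.univ := by
        rw [← Set.compl_empty_iff, hsc]
      have hconn : H.Connected := by
        rw [connected_iff]
        refine ⟨fun v w => ?_, ⟨u⟩⟩
        have hv : v ∈ s := hsu ▸ Set.mem_univ v
        have hw : w ∈ s := hsu ▸ Set.mem_univ w
        exact (Reachable.symm hv).trans hw
      have := tree_edge_ncard ⟨hconn, ha⟩
      omega
    · have hcl : ∀ a b, H.Adj a b → a ∈ s → b ∈ s := fun a b hab has =>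
        has.trans hab.reachable
      have hscne : sᶜ.Nonempty := Set.nonempty_iff_ne_empty.mpr hsc
      have hsne : s.Nonempty := ⟨u, Reachable.refl u⟩
      have hsplit := edge_split H s hcl
      have hcards : s.ncard + sᶜ.ncard = Nat.card W := Set.ncard_add_ncard_compl s
      have hslt : s.ncard < Nat.card W := by
        have := (Set.ncard_pos (Set.toFinite _)).mpr hscne
        omega
      have hsclt : sᶜ.ncard < Nat.card W := by
        have := (Set.ncard_pos (Set.toFinite _)).mpr hsne
        omega
      have h1 : (H.induce s).edgeSet.ncard + 1 ≤ Nat.card ↑s := by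
        refine ih (H.induce s) ?_ (isAcyclic_induce ha s) hsne.to_subtype
        rw [Nat.card_coe_set_eq]; omega
      have h2 : (H.induce sᶜ).edgeSet.ncard + 1 ≤ Nat.card ↑sᶜ := by
        refine ih (H.induce sᶜ) ?_ (isAcyclic_induce ha sᶜ) hscne.to_subtype
        rw [Nat.card_coe_set_eq]; omega
      rw [Nat.card_coe_set_eq] at h1 h2
      omega

lemma forest_card {W : Type u} [Finite W] {H : SimpleGraph W} (ha : H.IsAcyclic)
    (hne : Nonempty W) : H.edgeSet.ncard + 1 ≤ Nat.card W :=
  forest_card_aux (Nat.card W) H le_rfl ha hne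

lemma forest_conn {W : Type u} [Finite W] {H : SimpleGraph W} (ha : H.IsAcyclic)
    (hne : Nonempty W) (hc : Nat.card W ≤ H.edgeSet.ncard + 1) : H.Connected := by
  by_contra hnc
  rw [connected_iff] at hnc
  push_neg at hnc
  have hpre : ¬ H.Preconnected := fun h => @IsEmpty.false W (hnc h) hne.some
  rw [SimpleGraph.Preconnected] at hpre
  push_neg at hpre
  obtain ⟨v, w, hvw⟩ := hpre
  set s : Set W := {z | H.Reachable v z} with hs
  have hcl : ∀ a b, H.Adj a b → a ∈ s → b ∈ s := fun a b hab has =>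
    has.trans hab.reachable
  have hsne : s.Nonempty := ⟨v, Reachable.refl v⟩
  have hscne : sᶜ.Nonempty := ⟨w, hvw⟩
  have hsplit := edge_split H s hcl
  have hcards : s.ncard + sᶜ.ncard = Nat.card W := Set.ncard_add_ncard_compl s
  have h1 := forest_card (isAcyclic_induce ha s) hsne.to_subtype
  have h2 := forest_card (isAcyclic_induce ha sᶜ) hscne.to_subtype
  rw [Nat.card_coe_set_eq] at h1 h2
  omega

theorem stmt4 {V : Type*} [Fintype V] (m : ℕ) (hm : 0 < m) (G F : SimpleGraph V)
    (hFG : F ≤ G) (hsp : IsSparse m F) (x y : V)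
    (hxy : G.Adj x y) (hnF : ¬ F.Adj x y)
    (Q : F.Subgraph) (hx : x ∈ Q.verts) (hy : y ∈ Q.verts)
    (htc : IsTreeConn m Q.coe)
    (hmin : ∀ Q' : F.Subgraph, Q' ≤ Q → x ∈ Q'.verts → y ∈ Q'.verts →
      IsTreeConn m Q'.coe → Q' = Q)
    (e : Sym2 V) (he : e ∈ Q.edgeSet) :
    IsSparse m (F.deleteEdges {e} ⊔ SimpleGraph.fromEdgeSet {s(x, y)}) := by
  classical
  have hxyne : x ≠ y := hxy.ne
  set A := Q.verts with hA
  obtain ⟨T, hTQ, hTtree, hTdisj⟩ := htc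
  -- mapped tree edge sets
  set Ei : Fin m → Set (Sym2 V) :=
    fun i => Sym2.map (Subtype.val : A → V) '' (T i).edgeSet with hEi
  have hEiF : ∀ i, Ei i ⊆ {e' ∈ F.edgeSet | ∀ v ∈ e', v ∈ A} := by
    rintro i e' ⟨e'', he'', rfl⟩
    induction e'' using Sym2.ind with
    | _ a b =>
      rw [SimpleGraph.mem_edgeSet] at he''
      have hQab : Q.Adj ↑a ↑b := (SimpleGraph.Subgraph.coe_adj _ _ _).mp (hTQ i he'')
      refine ⟨by simpa using hQab.adj_sub, ?_⟩
      intro v hv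
      rw [Sym2.map_pair_eq, Sym2.mem_iff] at hv
      rcases hv with h | h
      · rw [h]; exact a.2
      · rw [h]; exact b.2
  have hEicard : ∀ i, (Ei i).ncard + 1 = A.ncard := by
    intro i
    rw [hEi]
    rw [Set.ncard_image_of_injective _ (Sym2.map.injective Subtype.val_injective)]
    rw [tree_edge_ncard (hTtree i), Nat.card_coe_set_eq]
  have hEidisj : ∀ i j, i ≠ j → Disjoint (Ei i) (Ei j) := by
    intro i j hij
    exact Set.disjoint_image_of_injective
      (Sym2.map.injective Subtype.val_injective) (hTdisj i j hij)
  have hApos : 1 ≤ A.ncard := by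
    have := hEicard ⟨0, hm⟩
    omega
  -- the key lemma: tight sets containing x and y contain all of A
  have key : ∀ S : Set V, x ∈ S → y ∈ S →
      (eIn F S : ℤ) = (m : ℤ) * S.ncard - m → A ⊆ S := by
    intro S hxS hyS htight
    set B := A ∩ S with hB
    have hBA : B ⊆ A := Set.inter_subset_left
    have hxB : x ∈ B := ⟨hx, hxS⟩
    have hyB : y ∈ B := ⟨hy, hyS⟩
    have hBne : B.Nonempty := ⟨x, hxB⟩
    have hBpos : 1 ≤ B.ncard := (Set.ncard_pos (Set.toFinite _)).mpr hBne
    set f : ↑B → ↑A := Set.inclusion hBA with hf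
    have hfinj : Function.Injective f := Set.inclusion_injective hBA
    set Hi : Fin m → SimpleGraph ↑B := fun i => SimpleGraph.comap f (T i) with hHi
    set Di : Fin m → Set (Sym2 V) :=
      fun i => Sym2.map (Subtype.val : B → V) '' (Hi i).edgeSet with hDi
    have hDi_eq : ∀ i, Di i = {e' ∈ Ei i | ∀ v ∈ e', v ∈ B} := by
      intro i
      ext e'
      constructor
      · rintro ⟨e'', he'', rfl⟩
        induction e'' using Sym2.ind with
        | _ a b =>
          rw [SimpleGraph.mem_edgeSet] at he''
          have hT : (T i).Adj (f a) (f b) := he''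
          constructor
          · exact ⟨s(f a, f b), by simpa using hT, by simp [Sym2.map_pair_eq, hf]⟩
          · intro v hv
            rw [Sym2.map_pair_eq, Sym2.mem_iff] at hv
            rcases hv with h | h
            · rw [h]; exact a.2
            · rw [h]; exact b.2
      · rintro ⟨⟨e'', he'', rfl⟩, hin⟩
        induction e'' using Sym2.ind with
        | _ a b =>
          rw [SimpleGraph.mem_edgeSet] at he''
          have haB : (a : V) ∈ B := hin _ (by simp [Sym2.map_pair_eq])
          have hbB : (b : V) ∈ B := hin _ (by simp [Sym2.map_pair_eq])
          have hfa : f ⟨(a : V), haB⟩ = a := Subtype.ext rfl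
          have hfb : f ⟨(b : V), hbB⟩ = b := Subtype.ext rfl
          refine ⟨s(⟨(a : V), haB⟩, ⟨(b : V), hbB⟩), ?_, by simp [Sym2.map_pair_eq]⟩
          rw [SimpleGraph.mem_edgeSet]
          show (T i).Adj (f ⟨(a : V), haB⟩) (f ⟨(b : V), hbB⟩)
          rw [hfa, hfb]
          exact he''
    have hDisub : ∀ i, Di i ⊆ Ei i := by
      intro i
      rw [hDi_eq i]
      exact Set.sep_subset _ _
    have hDidisj : ∀ i j, i ≠ j → Disjoint (Di i) (Di j) := fun i j hij =>
      Set.disjoint_of_subset (hDisub i) (hDisub j) (hEidisj i j hij)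
    have hDicard : ∀ i, (Di i).ncard = (Hi i).edgeSet.ncard := by
      intro i
      rw [hDi]
      exact Set.ncard_image_of_injective _ (Sym2.map.injective Subtype.val_injective)
    -- the union of tree edges and its part inside B
    set K : Set (Sym2 V) := ⋃ i, Ei i with hK
    set KB : Set (Sym2 V) := ⋃ i, Di i with hKB
    have hKcard : K.ncard = ∑ i : Fin m, (Ei i).ncard := ncard_iUnion_fin Ei hEidisj
    have hKBcard : KB.ncard = ∑ i : Fin m, (Di i).ncard := ncard_iUnion_fin Di hDidisj
    have hKcard' : (K.ncard : ℤ) = (m : ℤ) * A.ncard - m := by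
      rw [hKcard]
      push_cast
      rw [Finset.sum_congr rfl (fun i _ => show ((Ei i).ncard : ℤ) = (A.ncard : ℤ) - 1 by
        have := hEicard i; push_cast [← this]; ring)]
      simp [Finset.sum_const]
    have hKBsub : KB ⊆ K := Set.iUnion_mono hDisub
    -- KB is small : it consists of F-edges inside B
    have hKB_le : (KB.ncard : ℤ) ≤ (m : ℤ) * B.ncard - m := by
      have hsub : KB ⊆ {e' ∈ F.edgeSet | ∀ v ∈ e', v ∈ B} := by
        rintro e' he'
        rw [hKB, Set.mem_iUnion] at he'
        obtain ⟨i, hi⟩ := he'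
        rw [hDi_eq i] at hi
        exact ⟨(hEiF i hi.1).1, hi.2⟩
      calc (KB.ncard : ℤ) ≤ (eIn F B : ℤ) := by
            exact_mod_cast Set.ncard_le_ncard hsub (Set.toFinite _)
        _ ≤ (m : ℤ) * B.ncard - m := hsp B hBne
    -- lower bound on KB via the union count
    have hKB_ge : (m : ℤ) * B.ncard - m ≤ (KB.ncard : ℤ) := by
      have hKdiff : K \ KB ⊆ {e' ∈ F.edgeSet | ∀ v ∈ e', v ∈ A ∪ S} := by
        rintro e' ⟨he', -⟩
        rw [hK, Set.mem_iUnion] at he'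
        obtain ⟨i, hi⟩ := he'
        exact ⟨(hEiF i hi).1, fun v hv => Or.inl ((hEiF i hi).2 v hv)⟩
      have hSsub : {e' ∈ F.edgeSet | ∀ v ∈ e', v ∈ S}
          ⊆ {e' ∈ F.edgeSet | ∀ v ∈ e', v ∈ A ∪ S} :=
        fun e' he' => ⟨he'.1, fun v hv => Or.inr (he'.2 v hv)⟩
      have hdisj : Disjoint {e' ∈ F.edgeSet | ∀ v ∈ e', v ∈ S} (K \ KB) := by
        rw [Set.disjoint_left]
        rintro e' ⟨-, hin⟩ ⟨heK, henKB⟩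
        apply henKB
        rw [hK, Set.mem_iUnion] at heK
        obtain ⟨i, hi⟩ := heK
        rw [hKB, Set.mem_iUnion]
        refine ⟨i, ?_⟩
        rw [hDi_eq i]
        exact ⟨hi, fun v hv => ⟨(hEiF i hi).2 v hv, hin v hv⟩⟩
      have hub : eIn F S + (K \ KB).ncard ≤ eIn F (A ∪ S) := by
        rw [eIn, ← Set.ncard_union_eq hdisj (Set.toFinite _) (Set.toFinite _)]
        exact Set.ncard_le_ncard (Set.union_subset hSsub hKdiff) (Set.toFinite _)
      have hdiffcard : (K \ KB).ncard = K.ncard - KB.ncard :=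
        Set.ncard_diff hKBsub (Set.toFinite _)
      have hKBleK : KB.ncard ≤ K.ncard := Set.ncard_le_ncard hKBsub (Set.toFinite _)
      have hAuS : (eIn F (A ∪ S) : ℤ) ≤ (m : ℤ) * (A ∪ S).ncard - m :=
        hsp (A ∪ S) ⟨x, Or.inr hxS⟩
      have huim : (A ∪ S).ncard + B.ncard = A.ncard + S.ncard := by
        rw [hB]
        exact Set.ncard_union_add_ncard_inter A S (Set.toFinite _) (Set.toFinite _)
      have hub' : (eIn F S : ℤ) + ((K.ncard : ℤ) - KB.ncard) ≤ (eIn F (A ∪ S) : ℤ) := by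
        have : ((K \ KB).ncard : ℤ) = (K.ncard : ℤ) - KB.ncard := by
          rw [hdiffcard]
          push_cast [Nat.cast_sub hKBleK]
          ring
        rw [← this]
        exact_mod_cast hub
      have huim' : ((A ∪ S).ncard : ℤ) = (A.ncard : ℤ) + S.ncard - B.ncard := by
        have : ((A ∪ S).ncard : ℤ) + B.ncard = (A.ncard : ℤ) + S.ncard := by
          exact_mod_cast huim
        linarith
      rw [htight] at hub'
      rw [huim'] at hAuS
      rw [hKcard'] at hub'
      nlinarith [hub', hAuS]
    have hKBeq : (KB.ncard : ℤ) = (m : ℤ) * B.ncard - m := le_antisymm hKB_le hKB_ge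
    -- each restricted tree has exactly B.ncard - 1 edges
    have hHi_le : ∀ i, (Hi i).edgeSet.ncard + 1 ≤ B.ncard := by
      intro i
      have hacyc : (Hi i).IsAcyclic := isAcyclic_comap (hTtree i).IsAcyclic ⟨f, hfinj⟩
      have := forest_card (H := Hi i) hacyc hBne.to_subtype
      rwa [Nat.card_coe_set_eq] at this
    have hsum : ∑ i : Fin m, (Hi i).edgeSet.ncard = m * (B.ncard - 1) := by
      have hKB2 : ∑ i : Fin m, (Hi i).edgeSet.ncard = KB.ncard := by
        rw [hKBcard]
        exact Finset.sum_congr rfl (fun i _ => (hDicard i).symm)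
      have h1 : (↑(∑ i : Fin m, (Hi i).edgeSet.ncard) : ℤ) = (m : ℤ) * B.ncard - m := by
        rw [hKB2]
        exact hKBeq
      have h2 : ((m * (B.ncard - 1) : ℕ) : ℤ) = (m : ℤ) * B.ncard - m := by
        push_cast [Nat.cast_sub hBpos]
        ring
      omega
    have hHi_eq : ∀ i, (Hi i).edgeSet.ncard = B.ncard - 1 := by
      intro i
      by_contra hne
      have hlt : (Hi i).edgeSet.ncard < B.ncard - 1 := by
        have := hHi_le i
        omega
      have : ∑ j : Fin m, (Hi j).edgeSet.ncard < ∑ _j : Fin m, (B.ncard - 1) := by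
        apply Finset.sum_lt_sum (fun j _ => by have := hHi_le j; omega)
        exact ⟨i, Finset.mem_univ i, hlt⟩
      rw [hsum] at this
      simp [Finset.sum_const, Finset.card_univ] at this
    have hHitree : ∀ i, (Hi i).IsTree := by
      intro i
      have hacyc : (Hi i).IsAcyclic := isAcyclic_comap (hTtree i).IsAcyclic ⟨f, hfinj⟩
      refine ⟨?_, hacyc⟩
      apply forest_conn (H := Hi i) hacyc hBne.to_subtype
      rw [Nat.card_coe_set_eq, hHi_eq i]
      omega
    -- build the smaller subgraph
    set Q' : F.Subgraph := Q.induce B with hQ'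
    have hQ'le : Q' ≤ Q :=
      le_trans (SimpleGraph.Subgraph.induce_mono_right hBA)
        (le_of_eq Q.induce_self_verts)
    have hQ'verts : Q'.verts = B := rfl
    have htc' : IsTreeConn m Q'.coe := by
      refine ⟨Hi, ?_, hHitree, ?_⟩
      · intro i u v huv
        have hT : (T i).Adj (f u) (f v) := huv
        have hQab : Q.Adj ↑u ↑v := (SimpleGraph.Subgraph.coe_adj _ _ _).mp (hTQ i hT)
        exact (SimpleGraph.Subgraph.coe_adj _ _ _).mpr ⟨u.2, v.2, hQab⟩
      · intro i j hij
        rw [Set.disjoint_left]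
        intro e' hei hej
        induction e' using Sym2.ind with
        | _ a b =>
          have h1 : s(f a, f b) ∈ (T i).edgeSet := hei
          have h2 : s(f a, f b) ∈ (T j).edgeSet := hej
          exact Set.disjoint_left.mp (hTdisj i j hij) h1 h2
    have := hmin Q' hQ'le hxB hyB htc'
    have hBA' : B = A := by
      rw [← hQ'verts, this]
    rw [← Set.inter_eq_left, ← hB, hBA']
  -- Now the main argument
  intro S hSne
  set F' := F.deleteEdges {e} ⊔ SimpleGraph.fromEdgeSet {s(x, y)} with hF'
  have hxynd : ¬ (s(x, y) : Sym2 V).IsDiag := by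
    rw [Sym2.mk_isDiag_iff]
    exact hxyne
  have hF'edge : F'.edgeSet = (F.edgeSet \ {e}) ∪ {s(x, y)} := by
    rw [hF', SimpleGraph.edgeSet_sup, SimpleGraph.edgeSet_deleteEdges,
      SimpleGraph.edgeSet_fromEdgeSet]
    congr 1
    ext e'
    simp only [Set.mem_diff, Set.mem_singleton_iff, Set.mem_setOf_eq]
    constructor
    · rintro ⟨h1, -⟩; exact h1
    · rintro rfl; exact ⟨rfl, hxynd⟩
  have hxyF : s(x, y) ∉ F.edgeSet := by
    rw [SimpleGraph.mem_edgeSet]; exact hnF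
  by_cases hxyS : x ∈ S ∧ y ∈ S
  · obtain ⟨hxS, hyS⟩ := hxyS
    by_cases htight : (eIn F S : ℤ) = (m : ℤ) * S.ncard - m
    · -- tight case : A ⊆ S, so e lies inside S
      have hAS : A ⊆ S := key S hxS hyS htight
      have heF : e ∈ F.edgeSet := Q.edgeSet_subset he
      have heS : ∀ v ∈ e, v ∈ S := fun v hv =>
        hAS (SimpleGraph.Subgraph.mem_verts_of_mem_edge he hv)
      have hein : e ∈ {e' ∈ F.edgeSet | ∀ v ∈ e', v ∈ S} := ⟨heF, heS⟩
      have hW : {e' ∈ F'.edgeSet | ∀ v ∈ e', v ∈ S}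
          = insert s(x, y) ({e' ∈ F.edgeSet | ∀ v ∈ e', v ∈ S} \ {e}) := by
        ext e'
        rw [hF'edge]
        simp only [Set.mem_union, Set.mem_diff, Set.mem_singleton_iff, Set.mem_setOf_eq,
          Set.mem_insert_iff]
        constructor
        · rintro ⟨(⟨h1, h2⟩ | rfl), h3⟩
          · exact Or.inr ⟨⟨h1, h3⟩, h2⟩
          · exact Or.inl rfl
        · rintro (rfl | ⟨⟨h1, h3⟩, h2⟩)
          · refine ⟨Or.inr rfl, ?_⟩
            intro v hv
            rw [Sym2.mem_iff] at hv
            rcases hv with h | h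
            · rw [h]; exact hxS
            · rw [h]; exact hyS
          · exact ⟨Or.inl ⟨h1, h2⟩, h3⟩
      have hnotin : s(x, y) ∉ {e' ∈ F.edgeSet | ∀ v ∈ e', v ∈ S} \ {e} :=
        fun h => hxyF h.1.1
      have hcount : eIn F' S = eIn F S := by
        unfold eIn
        rw [hW, Set.ncard_insert_of_notMem hnotin (Set.toFinite _),
          Set.ncard_diff_singleton_of_mem hein]
        have hpos : 1 ≤ {e' ∈ F.edgeSet | ∀ v ∈ e', v ∈ S}.ncard :=
          (Set.ncard_pos (Set.toFinite _)).mpr ⟨e, hein⟩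
        omega
      rw [hcount, htight]
    · -- slack case
      have hsl : (eIn F S : ℤ) ≤ (m : ℤ) * S.ncard - m - 1 := by
        have := hsp S hSne
        omega
      have hsub : {e' ∈ F'.edgeSet | ∀ v ∈ e', v ∈ S}
          ⊆ insert s(x, y) {e' ∈ F.edgeSet | ∀ v ∈ e', v ∈ S} := by
        rintro e' ⟨he', hin⟩
        rw [hF'edge] at he'
        rcases he' with ⟨h1, -⟩ | h1
        · exact Set.mem_insert_of_mem _ ⟨h1, hin⟩
        · rw [h1]; exact Set.mem_insert _ _
      have : eIn F' S ≤ eIn F S + 1 := by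
        calc eIn F' S ≤ (insert s(x, y) {e' ∈ F.edgeSet | ∀ v ∈ e', v ∈ S}).ncard :=
              Set.ncard_le_ncard hsub (Set.toFinite _)
          _ ≤ eIn F S + 1 := Set.ncard_insert_le _ _
      have : (eIn F' S : ℤ) ≤ (eIn F S : ℤ) + 1 := by exact_mod_cast this
      omega
  · -- x and y are not both in S
    have hsub : {e' ∈ F'.edgeSet | ∀ v ∈ e', v ∈ S}
        ⊆ {e' ∈ F.edgeSet | ∀ v ∈ e', v ∈ S} := by
      rintro e' ⟨he', hin⟩
      rw [hF'edge] at he'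
      rcases he' with ⟨h1, -⟩ | h1
      · exact ⟨h1, hin⟩
      · exfalso
        apply hxyS
        rw [h1] at hin
        exact ⟨hin x (Sym2.mem_mk_left x y), hin y (Sym2.mem_mk_right x y)⟩
    have h1 : eIn F' S ≤ eIn F S := Set.ncard_le_ncard hsub (Set.toFinite _)
    have h2 := hsp S hSne
    have : (eIn F' S : ℤ) ≤ (eIn F S : ℤ) := by exact_mod_cast h1
    omega
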